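/- arXiv:1709.03883 — 3 statements merged into one kernel-verified Lean document; each statement's English description precedes it below -/
import Mathlib

section
/- The midpoint-rule frequency error is cancelled by the surrogate modification to fourth order: with ω_s² = ω²(1 + ω²h²/12)/(1 − ω²h²/12), the numerical frequency Ω(h) defined by cos(Ω h) = (1 − ω_s²h²/4)/(1 + ω_s²h²/4) satisfies Ω(h) = ω + O(h⁴) as h → 0 (for fixed ω > 0). Equivalently, the Taylor expansion of Ω(h) in h has vanishing h² and h³ coefficients beyond ω. -/
open Asymptotics

section aux
open Finset Complex

theorem my_cos_bound6 {x : ℝ} (hx : |x| ≤ 1) :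
    |Real.cos x - (1 - x ^ 2 / 2 + x ^ 4 / 24)| ≤ |x| ^ 6 :=
  calc
    |Real.cos x - (1 - x ^ 2 / 2 + x ^ 4 / 24)|
        = ‖Complex.cos x - (1 - (x : ℂ) ^ 2 / 2 + (x:ℂ) ^ 4 / 24)‖ := by
      rw [← Real.norm_eq_abs, ← Complex.norm_real]; push_cast; simp
    _ = ‖(Complex.exp (x * I) + Complex.exp (-x * I) - (2 - (x : ℂ) ^ 2 + (x:ℂ)^4/12)) / 2‖ := by
      congr 1
      rw [← Complex.two_cos]
      ring
    _ = ‖((Complex.exp (x * I) - ∑ m ∈ range 6, (x * I) ^ m / m.factorial) +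
              (Complex.exp (-x * I) - ∑ m ∈ range 6, (-x * I) ^ m / m.factorial)) / 2‖ := by
      congr 2
      have : (∑ m ∈ range 6, ((x:ℂ) * I) ^ m / m.factorial) +
          (∑ m ∈ range 6, (-(x:ℂ) * I) ^ m / m.factorial) = 2 - (x : ℂ) ^ 2 + (x:ℂ)^4/12 := by
        simp only [sum_range_succ, range_zero, sum_empty, Nat.factorial]
        push_cast
        ring_nf
        simp [Complex.I_sq]
        ring
      linear_combination this
    _ ≤ ‖(Complex.exp (x * I) - ∑ m ∈ range 6, (x * I) ^ m / m.factorial) / 2‖ +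
          ‖(Complex.exp (-x * I) - ∑ m ∈ range 6, (-x * I) ^ m / m.factorial) / 2‖ := by
      rw [add_div]; exact norm_add_le _ _
    _ = ‖Complex.exp (x * I) - ∑ m ∈ range 6, (x * I) ^ m / m.factorial‖ / 2 +
          ‖Complex.exp (-x * I) - ∑ m ∈ range 6, (-x * I) ^ m / m.factorial‖ / 2 := by
      simp [norm_div]
    _ ≤ ‖(x:ℂ) * I‖ ^ 6 * ((Nat.succ 6) * ((Nat.factorial 6) * (6 : ℕ) : ℝ)⁻¹) / 2 +
          ‖-(x:ℂ) * I‖ ^ 6 * ((Nat.succ 6) * ((Nat.factorial 6) * (6 : ℕ) : ℝ)⁻¹) / 2 := by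
      gcongr
      · exact Complex.exp_bound (by simpa) (by decide)
      · exact Complex.exp_bound (by simpa) (by decide)
    _ ≤ |x| ^ 6 := by
      simp only [norm_mul, Complex.norm_real, Real.norm_eq_abs, Complex.norm_I, mul_one, norm_neg]
      norm_num [Nat.factorial]
      nlinarith [abs_nonneg x, pow_nonneg (abs_nonneg x) 6]

theorem my_arctan_lip (a b : ℝ) : |Real.arctan a - Real.arctan b| ≤ |a - b| := by
  have hl : LipschitzWith 1 Real.arctan := by
    apply lipschitzWith_of_nnnorm_deriv_le Real.differentiable_arctan
    intro x
    rw [← NNReal.coe_le_coe, coe_nnnorm, NNReal.coe_one, Real.deriv_arctan, Real.norm_eq_abs,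
      abs_of_pos (by positivity)]
    rw [div_le_one (by positivity)]
    nlinarith [sq_nonneg x]
  have := hl.dist_le_mul a b
  simpa [Real.dist_eq] using this

end aux

set_option maxHeartbeats 2000000 in
/-- the surrogate modification cancels the midpoint frequency error to
fourth order: with `λ(h) = ω²(1 + ω²h²/12)/(1 − ω²h²/12)` and `Ω(h)` defined by
`cos(Ω(h)h) = (1 − λh²/4)/(1 + λh²/4)`, one has `Ω(h) = ω + O(h⁴)` as `h → 0⁺`. -/
theorem stmt13 (ω : ℝ) (hω : 0 < ω) :
    (fun h : ℝ =>
        Real.arccos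
          ((1 - (ω ^ 2 * (1 + ω ^ 2 * h ^ 2 / 12) / (1 - ω ^ 2 * h ^ 2 / 12)) * h ^ 2 / 4)
            / (1 + (ω ^ 2 * (1 + ω ^ 2 * h ^ 2 / 12) / (1 - ω ^ 2 * h ^ 2 / 12)) * h ^ 2 / 4))
          / h - ω)
      =O[nhdsWithin (0:ℝ) (Set.Ioi 0)] fun h : ℝ => h ^ 4 := by
  rw [Asymptotics.isBigO_iff]
  refine ⟨86 * (ω/2)^5, ?_⟩
  filter_upwards [Ioo_mem_nhdsGT (show (0:ℝ) < 1/ω by positivity)] with h hh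
  obtain ⟨hh0, hh1⟩ := hh
  have hωh1 : ω * h < 1 := by
    have := (lt_div_iff₀ hω).mp hh1
    linarith [this]
  obtain ⟨θ, hθdef⟩ : ∃ θ : ℝ, θ = ω * h / 2 := ⟨_, rfl⟩
  have hθ0 : 0 < θ := by rw [hθdef]; positivity
  have hθhalf : θ ≤ 1/2 := by rw [hθdef]; linarith
  have hθ2 : θ^2 < 3 := by nlinarith
  have hθpi : θ < Real.pi / 2 := by
    have := Real.pi_gt_three
    linarith
  obtain ⟨r, hrdef⟩ : ∃ r : ℝ, r = (3 + θ^2) / (3 - θ^2) := ⟨_, rfl⟩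
  have hr1 : 1 ≤ r := by
    rw [hrdef, le_div_iff₀ (by linarith)]
    nlinarith
  have hsq1 : 1 ≤ Real.sqrt r := Real.one_le_sqrt.mpr hr1
  obtain ⟨t, htdef⟩ : ∃ t : ℝ, t = θ * Real.sqrt r := ⟨_, rfl⟩
  have htθ : θ ≤ t := by rw [htdef]; nlinarith
  have ht0 : 0 < t := lt_of_lt_of_le hθ0 htθ
  have ht2 : t^2 = θ^2 * r := by
    rw [htdef, mul_pow, Real.sq_sqrt (by positivity)]
  have h3ne : (3:ℝ) - θ^2 ≠ 0 := by linarith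
  -- rewrite the argument of arccos
  have hden : (0:ℝ) < 1 - ω^2*h^2/12 := by nlinarith [sq_nonneg (ω*h)]
  have key : ω ^ 2 * (1 + ω ^ 2 * h ^ 2 / 12) / (1 - ω ^ 2 * h ^ 2 / 12) * h ^ 2 / 4 = t^2 := by
    have hne1 : (1 : ℝ) - ω^2*h^2/12 ≠ 0 := ne_of_gt hden
    have hne2 : (3:ℝ) - (ω*h/2)^2 ≠ 0 := by nlinarith
    rw [ht2, hrdef, hθdef]
    field_simp
    ring
  -- arccos identity
  have harc : Real.arccos ((1 - t^2)/(1 + t^2)) = 2 * Real.arctan t := by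
    have hcos : Real.cos (2 * Real.arctan t) = (1 - t^2)/(1 + t^2) := by
      rw [Real.cos_two_mul, Real.cos_sq_arctan]
      field_simp
      ring
    have han : 0 ≤ Real.arctan t := by
      rw [← Real.arctan_zero]
      exact Real.arctan_strictMono.monotone ht0.le
    rw [← hcos, Real.arccos_cos (by linarith) ?_]
    have := Real.arctan_lt_pi_div_two t
    linarith
  -- cos lower bound
  have hθ1 : |θ| ≤ 1 := by rw [abs_of_pos hθ0]; linarith
  have hθq : θ^2 ≤ 1/4 := by nlinarith
  have hθ6 : θ^6 ≤ 1/64 := by nlinarith [pow_pos hθ0 2, sq_nonneg (θ^2 - 1/4), sq_nonneg θ]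
  have hcosθ : (3:ℝ)/4 ≤ Real.cos θ := by
    have hb := my_cos_bound6 hθ1
    rw [abs_of_pos hθ0, abs_le] at hb
    nlinarith [hb.1, pow_pos hθ0 4]
  have hcne : Real.cos θ ≠ 0 := by intro hc0; rw [hc0] at hcosθ; norm_num at hcosθ
  -- cos(2θ) Taylor bound
  have h2θ1 : |2*θ| ≤ 1 := by rw [abs_of_pos (by linarith)]; linarith
  have hE : |Real.cos (2*θ) - (1 - 2*θ^2 + 2*θ^4/3)| ≤ 64*θ^6 := by
    have hb := my_cos_bound6 h2θ1
    rw [abs_of_pos (show (0:ℝ) < 2*θ by linarith)] at hb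
    have heq : (1 : ℝ) - 2*θ^2 + 2*θ^4/3 = 1 - (2*θ)^2/2 + (2*θ)^4/24 := by ring
    rw [heq]
    calc |Real.cos (2*θ) - (1 - (2*θ)^2/2 + (2*θ)^4/24)| ≤ (2*θ)^6 := hb
      _ = 64*θ^6 := by ring
  -- the key polynomial identity and bound
  have hNexpr : θ^2*(3+θ^2)*Real.cos θ^2 - (3-θ^2)*Real.sin θ^2
      = (-(1/3)*θ^6 + (1/3)*θ^8) + (θ^4+2*θ^2+3)/2 * (Real.cos (2*θ) - (1 - 2*θ^2 + 2*θ^4/3)) := by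
    have h1 : Real.cos θ^2 = 1/2 + Real.cos (2*θ)/2 := Real.cos_sq θ
    have h2 : Real.sin θ^2 = 1 - Real.cos θ^2 := Real.sin_sq θ
    rw [h2, h1]
    ring
  have hNb : |θ^2*(3+θ^2)*Real.cos θ^2 - (3-θ^2)*Real.sin θ^2| ≤ 129*θ^6 := by
    rw [hNexpr]
    have hA : |(-(1/3)*θ^6 + (1/3)*θ^8)| ≤ θ^6/3 := by
      rw [abs_le]
      constructor <;> nlinarith [pow_pos hθ0 6, pow_pos hθ0 8, sq_nonneg θ]
    have hB : |((θ^4+2*θ^2+3)/2 : ℝ)| ≤ 2 := by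
      rw [abs_of_pos (by positivity)]
      nlinarith [sq_nonneg θ, pow_pos hθ0 4]
    calc |(-(1/3)*θ^6 + (1/3)*θ^8) + (θ^4+2*θ^2+3)/2 * (Real.cos (2*θ) - (1 - 2*θ^2 + 2*θ^4/3))|
        ≤ |(-(1/3)*θ^6 + (1/3)*θ^8)| + |((θ^4+2*θ^2+3)/2 : ℝ)| * |Real.cos (2*θ) - (1 - 2*θ^2 + 2*θ^4/3)| := by
          rw [← abs_mul]; exact abs_add_le _ _
      _ ≤ θ^6/3 + 2 * (64*θ^6) := by gcongr
      _ ≤ 129*θ^6 := by nlinarith [pow_pos hθ0 6]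
  -- difference of squares
  obtain ⟨s, hsdef⟩ : ∃ s : ℝ, s = Real.tan θ := ⟨_, rfl⟩
  have hsθ : θ ≤ s := by rw [hsdef]; exact (Real.lt_tan hθ0 hθpi).le
  have hDpos : (0:ℝ) < (3-θ^2) * Real.cos θ^2 := by nlinarith
  have hts2 : t^2 - s^2 = (θ^2*(3+θ^2)*Real.cos θ^2 - (3-θ^2)*Real.sin θ^2)
      / ((3-θ^2) * Real.cos θ^2) := by
    rw [eq_div_iff (ne_of_gt hDpos), ht2, hrdef, hsdef, Real.tan_eq_sin_div_cos]
    field_simp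
    try ring
  have hD : (3:ℝ)/2 ≤ (3-θ^2) * Real.cos θ^2 := by nlinarith
  have hts2b : |t^2 - s^2| ≤ 86*θ^6 := by
    rw [hts2, abs_div, abs_of_pos hDpos, div_le_iff₀ hDpos]
    nlinarith [pow_pos hθ0 6]
  have hdiff : |t - s| ≤ 43*θ^5 := by
    have hmul : |t - s| * (t + s) = |t^2 - s^2| := by
      rw [← abs_of_pos (show (0:ℝ) < t + s by linarith), ← abs_mul]
      congr 1
      ring
    have h2θts : 2*θ ≤ t + s := by linarith
    have h1 : |t - s| * (2*θ) ≤ 86*θ^6 :=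
      le_trans (mul_le_mul_of_nonneg_left h2θts (abs_nonneg _)) (hmul ▸ hts2b)
    have h2 : |t - s| ≤ 86*θ^6/(2*θ) := (le_div_iff₀ (by linarith)).mpr h1
    have hθne : θ ≠ 0 := ne_of_gt hθ0
    calc |t - s| ≤ 86*θ^6/(2*θ) := h2
      _ = 43*θ^5 := by field_simp; ring
  -- assemble
  have hωeq : ω = 2 * Real.arctan s / h := by
    rw [hsdef, Real.arctan_tan (by linarith) hθpi, hθdef]
    field_simp
  simp only [key, harc]
  have hrw : 2 * Real.arctan t / h - ω = (Real.arctan t - Real.arctan s) * (2/h) := by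
    rw [hωeq]; ring
  rw [hrw]
  have h2h : (0:ℝ) < 2/h := by positivity
  calc ‖(Real.arctan t - Real.arctan s) * (2/h)‖
      = |Real.arctan t - Real.arctan s| * (2/h) := by
        rw [Real.norm_eq_abs, abs_mul, abs_of_pos h2h]
    _ ≤ (43*θ^5) * (2/h) := by
        gcongr
        exact le_trans (my_arctan_lip t s) hdiff
    _ = (86 * (ω/2)^5) * h^4 := by
        rw [hθdef]
        field_simp
        ring
    _ = 86 * (ω/2)^5 * ‖h^4‖ := by
        rw [Real.norm_eq_abs, abs_of_pos (pow_pos hh0 4)]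
end

section
/- For the midpoint-rule quadrature applied to t ↦ L(q(t), q̇(t)) with q C⁴ and L C², the discrete Lagrangian satisfies L_d(q(t_k), q(t_{k+1})) = ∫_{t_k}^{t_{k+1}} L(q(t), q̇(t)) dt + O(h³): there exists C (depending on bounds for L and q and their derivatives on a compact neighborhood) such that |h·L((q(t_k)+q(t_{k+1}))/2, (q(t_{k+1})−q(t_k))/h) − ∫_{t_k}^{t_{k+1}} L(q(t), q̇(t)) dt| ≤ C h³. -/
open Set Metric intervalIntegral

variable {F : Type*} [NormedAddCommGroup F] [NormedSpace ℝ F]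

lemma my_mvt {g g' : ℝ → F} (hg : ∀ u, HasDerivAt g (g' u) u) {s : Set ℝ}
    (hs : Convex ℝ s) {M : ℝ} (hM : ∀ u ∈ s, ‖g' u‖ ≤ M) {x y : ℝ}
    (hx : x ∈ s) (hy : y ∈ s) : ‖g y - g x‖ ≤ M * |y - x| := by
  simpa [Real.norm_eq_abs] using
    hs.norm_image_sub_le_of_norm_hasDerivWithin_le
      (fun u hu => (hg u).hasDerivWithinAt) hM hx hy

lemma my_taylor1 {g g' : ℝ → F} (hg : ∀ u, HasDerivAt g (g' u) u) {s : Set ℝ}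
    (hs : Convex ℝ s) {m t : ℝ} (hm : m ∈ s) (ht : t ∈ s) {M : ℝ}
    (hM : ∀ u ∈ s, ‖g' u - g' m‖ ≤ M) :
    ‖g t - g m - (t - m) • g' m‖ ≤ M * |t - m| := by
  have key := my_mvt (g := fun u => g u - (u - m) • g' m)
    (g' := fun u => g' u - g' m)
    (fun u => (hg u).sub ((((hasDerivAt_id u).sub_const m).smul_const (g' m)).congr_deriv (by simp)))
    hs hM hm ht
  simp only [sub_self, zero_smul, sub_zero] at key
  have e : g t - g m - (t - m) • g' m = g t - (t - m) • g' m - g m := by abel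
  rw [e]; exact key

lemma contDiff_deriv_nat {g : ℝ → F} {k : ℕ} (h : ContDiff ℝ (k + 1 : ℕ) g) :
    ContDiff ℝ k (deriv g) := by
  have h' : ContDiff ℝ ((k : WithTop ℕ∞) + 1) g := by exact_mod_cast h
  exact (contDiff_succ_iff_deriv.mp h').2.2

/-- second-order accuracy of the midpoint discrete Lagrangian:
`|h·L((q(t_k)+q(t_{k+1}))/2, (q(t_{k+1})−q(t_k))/h) − ∫_{t_k}^{t_{k+1}} L(q, q̇)| ≤ C h³`,
uniformly over subintervals of a fixed compact interval `[a, b]`. -/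
theorem stmt15 (n : ℕ) (q : ℝ → (Fin n → ℝ)) (hq : ContDiff ℝ 4 q)
    (L : (Fin n → ℝ) → (Fin n → ℝ) → ℝ)
    (hL : ContDiff ℝ 2 (fun p : (Fin n → ℝ) × (Fin n → ℝ) => L p.1 p.2))
    (a b : ℝ) (hab : a < b) :
    ∃ C : ℝ, ∀ tk tk1 : ℝ, a ≤ tk → tk < tk1 → tk1 ≤ b →
      |(tk1 - tk) * L ((2:ℝ)⁻¹ • (q tk + q tk1)) ((tk1 - tk)⁻¹ • (q tk1 - q tk))
          - ∫ t in tk..tk1, L (q t) (deriv q t)|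
        ≤ C * (tk1 - tk) ^ 3 := by
  -- derivatives of q
  set q1 : ℝ → Fin n → ℝ := deriv q with hq1d
  set q2 : ℝ → Fin n → ℝ := deriv q1 with hq2d
  set q3 : ℝ → Fin n → ℝ := deriv q2 with hq3d
  have hq4 : ContDiff ℝ ((3:ℕ) + 1 : ℕ) q := by exact_mod_cast hq
  have hq1 : ContDiff ℝ (3:ℕ) q1 := contDiff_deriv_nat hq4
  have hq2 : ContDiff ℝ (2:ℕ) q2 := contDiff_deriv_nat (k := 2) (by exact_mod_cast hq1)
  have hq3 : ContDiff ℝ (1:ℕ) q3 := contDiff_deriv_nat (k := 1) (by exact_mod_cast hq2)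
  have hdq : ∀ t, HasDerivAt q (q1 t) t :=
    fun t => ((hq.differentiable (by norm_num)) t).hasDerivAt
  have hdq1 : ∀ t, HasDerivAt q1 (q2 t) t :=
    fun t => ((hq1.differentiable (by norm_num)) t).hasDerivAt
  have hdq2 : ∀ t, HasDerivAt q2 (q3 t) t :=
    fun t => ((hq2.differentiable (by norm_num)) t).hasDerivAt
  -- the Lagrangian composed with the trajectory
  set Lu : (Fin n → ℝ) × (Fin n → ℝ) → ℝ := fun p => L p.1 p.2 with hLud
  set f : ℝ → ℝ := fun t => L (q t) (q1 t) with hfd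
  have hgc : ContDiff ℝ (2:ℕ) (fun t => (q t, q1 t)) :=
    (hq.of_le (by norm_num)).prodMk (hq1.of_le (by norm_num))
  have hf : ContDiff ℝ ((1:ℕ) + 1 : ℕ) f := by exact_mod_cast hL.comp hgc
  set f1 : ℝ → ℝ := deriv f with hf1d
  set f2 : ℝ → ℝ := deriv f1 with hf2d
  have hf1 : ContDiff ℝ (1:ℕ) f1 := contDiff_deriv_nat hf
  have hdf : ∀ t, HasDerivAt f (f1 t) t :=
    fun t => ((hf.differentiable (by norm_num)) t).hasDerivAt
  have hdf1 : ∀ t, HasDerivAt f1 (f2 t) t :=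
    fun t => ((hf1.differentiable (by norm_num)) t).hasDerivAt
  -- bounds on the compact interval
  have hcomp : IsCompact (Icc a b) := isCompact_Icc
  have hamem : a ∈ Icc a b := ⟨le_refl _, hab.le⟩
  obtain ⟨Mq, hMq⟩ := hcomp.exists_bound_of_continuousOn hq.continuous.continuousOn
  obtain ⟨Mq1, hMq1⟩ := hcomp.exists_bound_of_continuousOn hq1.continuous.continuousOn
  obtain ⟨Mq2, hMq2⟩ := hcomp.exists_bound_of_continuousOn hq2.continuous.continuousOn
  obtain ⟨Mq3, hMq3⟩ := hcomp.exists_bound_of_continuousOn hq3.continuous.continuousOn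
  obtain ⟨Mf2, hMf2⟩ := hcomp.exists_bound_of_continuousOn ((hf1.continuous_deriv (by norm_num)).continuousOn)
  have hMq0 : 0 ≤ Mq := le_trans (norm_nonneg _) (hMq a hamem)
  have hMq10 : 0 ≤ Mq1 := le_trans (norm_nonneg _) (hMq1 a hamem)
  have hMq20 : 0 ≤ Mq2 := le_trans (norm_nonneg _) (hMq2 a hamem)
  have hMq30 : 0 ≤ Mq3 := le_trans (norm_nonneg _) (hMq3 a hamem)
  have hMf20 : 0 ≤ Mf2 := le_trans (norm_nonneg _) (hMf2 a hamem)
  -- Lipschitz bound for L on a compact box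
  set R := max Mq Mq1 with hRd
  set K : Set ((Fin n → ℝ) × (Fin n → ℝ)) :=
    closedBall 0 R ×ˢ closedBall 0 R with hKd
  have hKc : IsCompact K := (isCompact_closedBall _ _).prod (isCompact_closedBall _ _)
  obtain ⟨Lip, hLip⟩ := hKc.exists_bound_of_continuousOn
    ((hL.continuous_fderiv (by norm_num)).continuousOn)
  have hR0 : (0 : ℝ) ≤ R := le_trans hMq0 (le_max_left _ _)
  have hLip0 : 0 ≤ Lip := le_trans (norm_nonneg _)
    (hLip (0, 0) ⟨mem_closedBall_self hR0, mem_closedBall_self hR0⟩)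
  have hLuLip : ∀ p ∈ K, ∀ p' ∈ K, ‖Lu p' - Lu p‖ ≤ Lip * ‖p' - p‖ := by
    intro p hp p' hp'
    exact ((convex_closedBall _ _).prod (convex_closedBall _ _)).norm_image_sub_le_of_norm_hasFDerivWithin_le
      (fun x _ => ((hL.differentiable (by norm_num)) x).hasFDerivAt.hasFDerivWithinAt)
      hLip hp hp'
  refine ⟨Lip * (Mq2 + 2 * Mq3) + Mf2, ?_⟩
  intro tk tk1 hat hlt h1b
  set d := tk1 - tk with hdd
  have hd0 : 0 < d := by simp [hdd]; linarith
  set m := (tk + tk1) / 2 with hmd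
  have hsub : Icc tk tk1 ⊆ Icc a b := Icc_subset_Icc hat h1b
  have hmI : m ∈ Icc tk tk1 := ⟨by rw [hmd]; linarith, by rw [hmd]; linarith⟩
  have habs : ∀ t ∈ Icc tk tk1, ∀ u ∈ Icc tk tk1, |t - u| ≤ d := by
    intro t ht u hu
    rw [abs_sub_le_iff]
    exact ⟨by rw [hdd]; linarith [ht.1, ht.2, hu.1, hu.2],
           by rw [hdd]; linarith [ht.1, ht.2, hu.1, hu.2]⟩
  have hcvx : Convex ℝ (Icc tk tk1) := convex_Icc _ _
  have hcvx' : Convex ℝ (Icc a b) := convex_Icc _ _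
  have htkI : tk ∈ Icc tk tk1 := ⟨le_refl _, hlt.le⟩
  have htk1I : tk1 ∈ Icc tk tk1 := ⟨hlt.le, le_refl _⟩
  -- E1 : Lipschitz bound on q2
  have E1 : ∀ u ∈ Icc tk tk1, ‖q2 u - q2 m‖ ≤ Mq3 * d := by
    intro u hu
    calc ‖q2 u - q2 m‖ ≤ Mq3 * |u - m| :=
          my_mvt hdq2 hcvx' (fun v hv => hMq3 v hv) (hsub hmI) (hsub hu)
      _ ≤ Mq3 * d := mul_le_mul_of_nonneg_left (habs u hu m hmI) hMq30
  -- E2 : first-order Taylor for q1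
  have E2 : ∀ t ∈ Icc tk tk1, ‖q1 t - q1 m - (t - m) • q2 m‖ ≤ Mq3 * d * d := by
    intro t ht
    calc ‖q1 t - q1 m - (t - m) • q2 m‖ ≤ (Mq3 * d) * |t - m| :=
          my_taylor1 hdq1 hcvx hmI ht E1
      _ ≤ Mq3 * d * d := mul_le_mul_of_nonneg_left (habs t ht m hmI)
          (mul_nonneg hMq30 hd0.le)
  -- E3 : second-order Taylor for q
  have E3 : ∀ t ∈ Icc tk tk1,
      ‖q t - q m - (t - m) • q1 m - (((t - m) ^ 2) / 2) • q2 m‖ ≤ Mq3 * d * d * d := by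
    intro t ht
    have hder : ∀ u, HasDerivAt (fun u => q u - (((u - m) ^ 2) / 2) • q2 m)
        (q1 u - (u - m) • q2 m) u := by
      intro u
      have h1 : HasDerivAt (fun u => ((u - m) ^ 2) / 2) (u - m) u := by
        have := (((hasDerivAt_id u).sub_const m).pow 2).div_const 2
        exact this.congr_deriv (by simp)
      exact (hdq u).sub (h1.smul_const (q2 m))
    have key := my_taylor1 hder hcvx hmI ht (M := Mq3 * d * d) ?_
    · simp only [sub_self, ne_eq, OfNat.ofNat_ne_zero, not_false_eq_true, zero_pow,
        zero_div, zero_smul, sub_zero] at key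
      calc ‖q t - q m - (t - m) • q1 m - (((t - m) ^ 2) / 2) • q2 m‖
          = ‖q t - (((t - m) ^ 2) / 2) • q2 m - q m - (t - m) • q1 m‖ := by
            congr 1; abel
        _ ≤ (Mq3 * d * d) * |t - m| := key
        _ ≤ Mq3 * d * d * d := mul_le_mul_of_nonneg_left (habs t ht m hmI)
            (mul_nonneg (mul_nonneg hMq30 hd0.le) hd0.le)
    · intro u hu
      simp only [sub_self, zero_smul, sub_zero]
      rw [sub_right_comm]
      exact E2 u hu
  -- E4 : first-order Taylor for q
  have E4 : ∀ t ∈ Icc tk tk1, ‖q t - q m - (t - m) • q1 m‖ ≤ Mq2 * d * d := by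
    intro t ht
    have hM : ∀ u ∈ Icc tk tk1, ‖q1 u - q1 m‖ ≤ Mq2 * d := by
      intro u hu
      calc ‖q1 u - q1 m‖ ≤ Mq2 * |u - m| :=
            my_mvt hdq1 hcvx' (fun v hv => hMq2 v hv) (hsub hmI) (hsub hu)
        _ ≤ Mq2 * d := mul_le_mul_of_nonneg_left (habs u hu m hmI) hMq20
    calc ‖q t - q m - (t - m) • q1 m‖ ≤ (Mq2 * d) * |t - m| :=
          my_taylor1 hdq hcvx hmI ht hM
      _ ≤ Mq2 * d * d := mul_le_mul_of_nonneg_left (habs t ht m hmI)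
          (mul_nonneg hMq20 hd0.le)
  -- midpoint position error
  set P := (2:ℝ)⁻¹ • (q tk + q tk1) with hPd
  set V := (tk1 - tk)⁻¹ • (q tk1 - q tk) with hVd
  have hP : ‖P - q m‖ ≤ Mq2 * d * d := by
    have e : P - q m = (2:ℝ)⁻¹ • ((q tk - q m - (tk - m) • q1 m)
        + (q tk1 - q m - (tk1 - m) • q1 m)) := by
      rw [hPd, hmd]; module
    rw [e]
    calc ‖(2:ℝ)⁻¹ • ((q tk - q m - (tk - m) • q1 m) + (q tk1 - q m - (tk1 - m) • q1 m))‖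
        = (2:ℝ)⁻¹ * ‖(q tk - q m - (tk - m) • q1 m) + (q tk1 - q m - (tk1 - m) • q1 m)‖ := by
          rw [norm_smul]; norm_num
      _ ≤ (2:ℝ)⁻¹ * (‖q tk - q m - (tk - m) • q1 m‖ + ‖q tk1 - q m - (tk1 - m) • q1 m‖) := by
          gcongr; exact norm_add_le _ _
      _ ≤ (2:ℝ)⁻¹ * (Mq2 * d * d + Mq2 * d * d) := by
          gcongr
          · exact E4 tk htkI
          · exact E4 tk1 htk1I
      _ = Mq2 * d * d := by ring
  -- midpoint velocity error
  have hV : ‖V - q1 m‖ ≤ 2 * Mq3 * d * d := by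
    have e0 : q tk1 - q tk - d • q1 m
        = (q tk1 - q m - (tk1 - m) • q1 m - (((tk1 - m) ^ 2) / 2) • q2 m)
          - (q tk - q m - (tk - m) • q1 m - (((tk - m) ^ 2) / 2) • q2 m) := by
      rw [hdd, hmd]; module
    have e : V - q1 m = d⁻¹ • (q tk1 - q tk - d • q1 m) := by
      have e1 : d⁻¹ • (d • q1 m) = q1 m := by
        rw [smul_smul, inv_mul_cancel₀ hd0.ne', one_smul]
      rw [hVd, ← hdd, smul_sub d⁻¹ (q tk1 - q tk) (d • q1 m), e1]
    rw [e, e0]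
    calc ‖d⁻¹ • ((q tk1 - q m - (tk1 - m) • q1 m - (((tk1 - m) ^ 2) / 2) • q2 m)
          - (q tk - q m - (tk - m) • q1 m - (((tk - m) ^ 2) / 2) • q2 m))‖
        = d⁻¹ * ‖(q tk1 - q m - (tk1 - m) • q1 m - (((tk1 - m) ^ 2) / 2) • q2 m)
          - (q tk - q m - (tk - m) • q1 m - (((tk - m) ^ 2) / 2) • q2 m)‖ := by
          rw [norm_smul, Real.norm_eq_abs, abs_of_pos (inv_pos.mpr hd0)]
      _ ≤ d⁻¹ * (Mq3 * d * d * d + Mq3 * d * d * d) := by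
          gcongr
          exact (norm_sub_le _ _).trans (add_le_add (E3 tk1 htk1I) (E3 tk htkI))
      _ = 2 * Mq3 * d * d := by field_simp; ring
  -- memberships in K
  have hqmem : ∀ t ∈ Icc tk tk1, ‖q t‖ ≤ Mq := fun t ht => hMq t (hsub ht)
  have hPK : P ∈ closedBall (0 : Fin n → ℝ) R := by
    rw [mem_closedBall_zero_iff]
    calc ‖P‖ = (2:ℝ)⁻¹ * ‖q tk + q tk1‖ := by
          rw [hPd, norm_smul]; norm_num
      _ ≤ (2:ℝ)⁻¹ * (‖q tk‖ + ‖q tk1‖) := by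
          gcongr
          exact norm_add_le _ _
      _ ≤ (2:ℝ)⁻¹ * (Mq + Mq) := by
          gcongr
          exacts [hqmem tk htkI, hqmem tk1 htk1I]
      _ = Mq := by ring
      _ ≤ R := le_max_left _ _
  have hVK : V ∈ closedBall (0 : Fin n → ℝ) R := by
    rw [mem_closedBall_zero_iff]
    have hqd : ‖q tk1 - q tk‖ ≤ Mq1 * |tk1 - tk| :=
      my_mvt hdq hcvx' (fun v hv => hMq1 v hv) (hsub htkI) (hsub htk1I)
    calc ‖V‖ = (tk1 - tk)⁻¹ * ‖q tk1 - q tk‖ := by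
          rw [hVd, norm_smul, Real.norm_eq_abs, abs_of_pos (by rw [← hdd]; exact inv_pos.mpr hd0)]
      _ ≤ (tk1 - tk)⁻¹ * (Mq1 * |tk1 - tk|) := by
          have h0 : (0:ℝ) ≤ (tk1 - tk)⁻¹ := by rw [← hdd]; exact (inv_pos.mpr hd0).le
          exact mul_le_mul_of_nonneg_left hqd h0
      _ = Mq1 := by
          rw [abs_of_pos (by rw [← hdd]; exact hd0)]
          field_simp [show tk1 - tk ≠ 0 from hd0.ne']
      _ ≤ R := le_max_right _ _
  have hmab : m ∈ Icc a b := hsub hmI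
  have hmK : (q m, q1 m) ∈ K := by
    constructor
    · rw [mem_closedBall_zero_iff]
      exact (hMq m hmab).trans (le_max_left _ _)
    · rw [mem_closedBall_zero_iff]
      exact (hMq1 m hmab).trans (le_max_right _ _)
  have hPVK : (P, V) ∈ K := ⟨hPK, hVK⟩
  -- Lipschitz step: |L P V - f m| ≤ Lip * (Mq2 + 2 Mq3) * d^2
  have hLstep : |L P V - f m| ≤ Lip * ((Mq2 + 2 * Mq3) * d * d) := by
    have key := hLuLip (q m, q1 m) hmK (P, V) hPVK
    have e : Lu (P, V) - Lu (q m, q1 m) = L P V - f m := by rw [hLud, hfd]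
    rw [e] at key
    have hnorm : ‖((P, V) : (Fin n → ℝ) × (Fin n → ℝ)) - (q m, q1 m)‖
        ≤ (Mq2 + 2 * Mq3) * d * d := by
      rw [Prod.norm_def]
      apply max_le
      · calc ‖((P, V) - (q m, q1 m)).1‖ = ‖P - q m‖ := rfl
          _ ≤ Mq2 * d * d := hP
          _ ≤ (Mq2 + 2 * Mq3) * d * d := by
              have : (0:ℝ) ≤ 2 * Mq3 * d * d := by positivity
              nlinarith
      · calc ‖((P, V) - (q m, q1 m)).2‖ = ‖V - q1 m‖ := rfl
          _ ≤ 2 * Mq3 * d * d := hV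
          _ ≤ (Mq2 + 2 * Mq3) * d * d := by
              have : (0:ℝ) ≤ Mq2 * d * d := by positivity
              nlinarith
    calc |L P V - f m| ≤ Lip * ‖((P, V) : (Fin n → ℝ) × (Fin n → ℝ)) - (q m, q1 m)‖ := by
          rw [← Real.norm_eq_abs]; exact key
      _ ≤ Lip * ((Mq2 + 2 * Mq3) * d * d) := by
          apply mul_le_mul_of_nonneg_left _ hLip0
          calc ‖((P, V) : (Fin n → ℝ) × (Fin n → ℝ)) - (q m, q1 m)‖
              ≤ (Mq2 + 2 * Mq3) * d * d := hnorm
            _ = (Mq2 + 2 * Mq3) * d * d := rfl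
  -- quadrature step
  have E5 : ∀ t ∈ Icc tk tk1, |f t - f m - (t - m) * f1 m| ≤ Mf2 * d * d := by
    intro t ht
    have hM : ∀ u ∈ Icc tk tk1, ‖f1 u - f1 m‖ ≤ Mf2 * d := by
      intro u hu
      calc ‖f1 u - f1 m‖ ≤ Mf2 * |u - m| :=
            my_mvt hdf1 hcvx' (fun v hv => hMf2 v hv) (hsub hmI) (hsub hu)
        _ ≤ Mf2 * d := mul_le_mul_of_nonneg_left (habs u hu m hmI) hMf20
    have key := my_taylor1 hdf hcvx hmI ht hM
    rw [Real.norm_eq_abs, smul_eq_mul] at key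
    calc |f t - f m - (t - m) * f1 m| ≤ (Mf2 * d) * |t - m| := key
      _ ≤ Mf2 * d * d := mul_le_mul_of_nonneg_left (habs t ht m hmI)
          (mul_nonneg hMf20 hd0.le)
  have hcontf : Continuous f := hf.continuous
  have hintf : IntervalIntegrable f MeasureTheory.volume tk tk1 :=
    hcontf.intervalIntegrable _ _
  have hintlin : IntervalIntegrable (fun t => f m + (t - m) * f1 m)
      MeasureTheory.volume tk tk1 := by
    exact Continuous.intervalIntegrable (by fun_prop) _ _
  have hzero : (∫ t in tk..tk1, (t - m)) = 0 := by
    rw [intervalIntegral.integral_sub intervalIntegrable_id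
      (intervalIntegrable_const), integral_id, integral_const, hmd, smul_eq_mul]
    ring
  have hlinint : (∫ t in tk..tk1, (f m + (t - m) * f1 m)) = d * f m := by
    rw [intervalIntegral.integral_add (intervalIntegrable_const)
      ((Continuous.intervalIntegrable (by fun_prop) _ _ :
        IntervalIntegrable (fun t : ℝ => (t - m) * f1 m) MeasureTheory.volume tk tk1)),
      integral_const, intervalIntegral.integral_mul_const, hzero, smul_eq_mul, hdd]
    ring
  have hquad : |d * f m - ∫ t in tk..tk1, f t| ≤ Mf2 * d * d * d := by
    have e : d * f m - ∫ t in tk..tk1, f t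
        = -(∫ t in tk..tk1, (f t - (f m + (t - m) * f1 m))) := by
      rw [intervalIntegral.integral_sub hintf hintlin, hlinint]; ring
    rw [e, abs_neg, ← Real.norm_eq_abs]
    calc ‖∫ t in tk..tk1, (f t - (f m + (t - m) * f1 m))‖
        ≤ Mf2 * d * d * |tk1 - tk| := by
          apply intervalIntegral.norm_integral_le_of_norm_le_const
          intro x hx
          have hxI : x ∈ Icc tk tk1 := by
            rw [Set.uIoc_of_le hlt.le] at hx
            exact ⟨hx.1.le, hx.2⟩
          have := E5 x hxI
          rw [Real.norm_eq_abs]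
          calc |f x - (f m + (x - m) * f1 m)| = |f x - f m - (x - m) * f1 m| := by
                ring_nf
            _ ≤ Mf2 * d * d := this
      _ = Mf2 * d * d * d := by rw [abs_of_pos (by rw [← hdd]; exact hd0), ← hdd]
  -- put the pieces together
  have hgoal : |(tk1 - tk) * L P V - ∫ t in tk..tk1, f t|
      ≤ (Lip * (Mq2 + 2 * Mq3) + Mf2) * (tk1 - tk) ^ 3 := by
    have e : (tk1 - tk) * L P V - ∫ t in tk..tk1, f t
        = d * (L P V - f m) + (d * f m - ∫ t in tk..tk1, f t) := by
      rw [← hdd]; ring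
    rw [e]
    calc |d * (L P V - f m) + (d * f m - ∫ t in tk..tk1, f t)|
        ≤ |d * (L P V - f m)| + |d * f m - ∫ t in tk..tk1, f t| := abs_add_le _ _
      _ ≤ d * (Lip * ((Mq2 + 2 * Mq3) * d * d)) + Mf2 * d * d * d := by
          apply add_le_add _ hquad
          rw [abs_mul, abs_of_pos hd0]
          exact mul_le_mul_of_nonneg_left hLstep hd0.le
      _ = (Lip * (Mq2 + 2 * Mq3) + Mf2) * (tk1 - tk) ^ 3 := by rw [hdd]; ring
  exact hgoal
end

section
/- Exactness of the surrogate map for the linear oscillator to fourth order: let q(t) = sin(ωt)/ω solve q̈ = −ω²q with q(0)=0, q̇(0)=1, and let (q_k) solve the surrogate midpoint recurrence q_{k+1} = 2((1 − λh²/4)/(1 + λh²/4))q_k − q_{k−1} with λ = ω²(1 + ω²h²/12)/(1 − ω²h²/12), initialized so that q_0 = q(0) and q_1 = q(h) + O(h⁵). Then q_2 − q(2h) = O(h⁵) as h → 0. -/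
open Asymptotics

set_option maxHeartbeats 1000000 in
/-- one-step fifth-order accuracy of the surrogate midpoint integrator for
the oscillator: with `q(t) = sin(ωt)/ω`, `q₀ = 0`, `q₁ = q(h) + O(h⁵)`, and
`q₂ = α(h)·q₁ − q₀` where `α(h) = 2(1 − λh²/4)/(1 + λh²/4)` and
`λ = ω²(1 + ω²h²/12)/(1 − ω²h²/12)`, one has `q₂ − q(2h) = O(h⁵)` as `h → 0⁺`. -/
theorem stmt18 (ω : ℝ) (hω : 0 < ω) (q1 : ℝ → ℝ)
    (hq1 : (fun h : ℝ => q1 h - Real.sin (ω * h) / ω)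
      =O[nhdsWithin (0:ℝ) (Set.Ioi 0)] fun h : ℝ => h ^ 5) :
    (fun h : ℝ =>
        (2 * (1 - (ω ^ 2 * (1 + ω ^ 2 * h ^ 2 / 12) / (1 - ω ^ 2 * h ^ 2 / 12)) * h ^ 2 / 4)
            / (1 + (ω ^ 2 * (1 + ω ^ 2 * h ^ 2 / 12) / (1 - ω ^ 2 * h ^ 2 / 12)) * h ^ 2 / 4))
          * q1 h - 0
        - Real.sin (ω * (2 * h)) / ω)
      =O[nhdsWithin (0:ℝ) (Set.Ioi 0)] fun h : ℝ => h ^ 5 := by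
  rw [isBigO_iff] at hq1 ⊢
  obtain ⟨c, hc⟩ := hq1
  refine ⟨2 * c + ω ^ 4, ?_⟩
  have hmem : Set.Ioo (0:ℝ) (1/ω) ∈ nhdsWithin (0:ℝ) (Set.Ioi 0) :=
    Ioo_mem_nhdsGT_of_mem ⟨le_refl 0, by positivity⟩
  filter_upwards [hc, Filter.eventually_mem_set.mpr hmem] with h hch hh
  simp only [Real.norm_eq_abs] at hch ⊢
  obtain ⟨hh0, hh1⟩ := hh
  have ht1 : ω * h < 1 := by
    have h2 := (lt_div_iff₀ hω).mp hh1
    nlinarith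
  have ht0 : 0 < ω * h := by positivity
  set x : ℝ := ω ^ 2 * h ^ 2 with hxdef
  have hx0 : 0 ≤ x := by positivity
  have hx1 : x ≤ 1 := by
    have : x = (ω * h) ^ 2 := by rw [hxdef]; ring
    rw [this]
    nlinarith
  have hden12 : (1:ℝ) - x / 12 ≠ 0 := by nlinarith
  have hden12' : (0:ℝ) < 1 - x / 12 := by nlinarith
  have hD : (0:ℝ) < 48 + 8 * x + x ^ 2 := by nlinarith
  -- the inner big coefficient
  set A : ℝ :=
    2 * (1 - (ω ^ 2 * (1 + ω ^ 2 * h ^ 2 / 12) / (1 - ω ^ 2 * h ^ 2 / 12)) * h ^ 2 / 4)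
      / (1 + (ω ^ 2 * (1 + ω ^ 2 * h ^ 2 / 12) / (1 - ω ^ 2 * h ^ 2 / 12)) * h ^ 2 / 4)
    with hAdef
  have hlam : ω ^ 2 * (1 + ω ^ 2 * h ^ 2 / 12) / (1 - ω ^ 2 * h ^ 2 / 12) * h ^ 2
      = x * (1 + x / 12) / (1 - x / 12) := by
    rw [hxdef]; field_simp
  have hdenA : (0:ℝ) < 1 + (ω ^ 2 * (1 + ω ^ 2 * h ^ 2 / 12) / (1 - ω ^ 2 * h ^ 2 / 12)) * h ^ 2 / 4 := by
    have h1 : (0:ℝ) ≤ x * (1 + x / 12) / (1 - x / 12) := by positivity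
    rw [hlam] at *
    nlinarith
  have hden12ω : (1:ℝ) - ω ^ 2 * h ^ 2 / 12 ≠ 0 := hden12
  have hxle : ω ^ 2 * h ^ 2 ≤ 1 := hx1
  have h48 : (48:ℝ) - ω ^ 2 * h ^ 2 * 4 ≠ 0 := by nlinarith
  have h48' : (12:ℝ) - ω ^ 2 * h ^ 2 ≠ 0 := by nlinarith
  have hAeq : A = 2 * (48 - 16 * x - x ^ 2) / (48 + 8 * x + x ^ 2) := by
    rw [hAdef, div_eq_div_iff (ne_of_gt hdenA) (ne_of_gt hD), hxdef]
    field_simp [hden12ω, h48, h48']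
    ring
  have hA2 : |A| ≤ 2 := by
    rw [hAeq, abs_div, abs_of_pos hD]
    rw [div_le_iff₀ hD]
    have : |2 * (48 - 16 * x - x ^ 2)| = 2 * (48 - 16 * x - x ^ 2) := by
      rw [abs_of_nonneg]; nlinarith
    rw [this]; nlinarith
  -- cosine Taylor bound
  have habs : |ω * h| ≤ 1 := by rw [abs_of_pos ht0]; linarith
  have hcos := Real.cos_bound habs
  have hwh4 : |ω * h| ^ 4 = x ^ 2 := by
    rw [abs_of_pos ht0, hxdef]; ring
  have hwh2 : (ω * h) ^ 2 = x := by rw [hxdef]; ring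
  rw [hwh4, hwh2] at hcos
  set e : ℝ := Real.cos (ω * h) - (1 - x / 2) with hedef
  have hcosval : Real.cos (ω * h) = 1 - x / 2 + e := by rw [hedef]; ring
  clear_value e
  have hAc : |A - 2 * Real.cos (ω * h)| ≤ ω ^ 4 * h ^ 4 := by
    have he : |e| ≤ x ^ 2 * (5 / 96) := hcos
    have heb : -(x ^ 2 * (5 / 96)) ≤ e ∧ e ≤ x ^ 2 * (5 / 96) := abs_le.mp he
    have hval : A - 2 * Real.cos (ω * h)
        = (4 * x ^ 2 + x ^ 3 - 2 * (48 + 8 * x + x ^ 2) * e) / (48 + 8 * x + x ^ 2) := by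
      rw [hAeq, hcosval]
      field_simp
      ring
    rw [hval, abs_div, abs_of_pos hD, div_le_iff₀ hD]
    have hx4 : ω ^ 4 * h ^ 4 = x ^ 2 := by rw [hxdef]; ring
    rw [hx4]
    have hDpos2 : (0:ℝ) ≤ 2 * (48 + 8 * x + x ^ 2) := by nlinarith
    have hDe1 : 2 * (48 + 8 * x + x ^ 2) * e ≤ 2 * (48 + 8 * x + x ^ 2) * (x ^ 2 * (5 / 96)) :=
      mul_le_mul_of_nonneg_left heb.2 hDpos2
    have hDe2 : 2 * (48 + 8 * x + x ^ 2) * (-(x ^ 2 * (5 / 96))) ≤ 2 * (48 + 8 * x + x ^ 2) * e :=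
      mul_le_mul_of_nonneg_left heb.1 hDpos2
    rw [abs_le]
    constructor <;>
      nlinarith [hDe1, hDe2, hx0, hx1, mul_nonneg hx0 hx0,
        mul_nonneg (mul_nonneg hx0 hx0) hx0,
        mul_nonneg (mul_nonneg (mul_nonneg hx0 hx0) hx0) hx0]
  -- sine facts
  have hs1 : |Real.sin (ω * h)| ≤ ω * h := by
    have := Real.abs_sin_le_abs (x := ω * h)
    rwa [abs_of_pos ht0] at this
  have hsin2 : Real.sin (ω * (2 * h)) = 2 * Real.sin (ω * h) * Real.cos (ω * h) := by
    have : ω * (2 * h) = 2 * (ω * h) := by ring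
    rw [this, Real.sin_two_mul]
  -- bound on q1 error
  have hq1b : |q1 h - Real.sin (ω * h) / ω| ≤ c * h ^ 5 := by
    have : |h ^ 5| = h ^ 5 := abs_of_pos (by positivity)
    rwa [this] at hch
  -- decompose
  have hdecomp : A * q1 h - 0 - Real.sin (ω * (2 * h)) / ω
      = A * (q1 h - Real.sin (ω * h) / ω)
        + (Real.sin (ω * h) / ω) * (A - 2 * Real.cos (ω * h)) := by
    rw [hsin2]; field_simp; ring
  rw [hdecomp]
  have habs5 : |h ^ 5| = h ^ 5 := abs_of_pos (by positivity)
  rw [habs5]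
  have hsw : |Real.sin (ω * h) / ω| ≤ h := by
    rw [abs_div, abs_of_pos hω, div_le_iff₀ hω]
    calc |Real.sin (ω * h)| ≤ ω * h := hs1
      _ = h * ω := by ring
  calc |A * (q1 h - Real.sin (ω * h) / ω)
        + (Real.sin (ω * h) / ω) * (A - 2 * Real.cos (ω * h))|
      ≤ |A * (q1 h - Real.sin (ω * h) / ω)|
        + |(Real.sin (ω * h) / ω) * (A - 2 * Real.cos (ω * h))| := abs_add_le _ _
    _ = |A| * |q1 h - Real.sin (ω * h) / ω|
        + |Real.sin (ω * h) / ω| * |A - 2 * Real.cos (ω * h)| := by rw [abs_mul, abs_mul]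
    _ ≤ 2 * (c * h ^ 5) + h * (ω ^ 4 * h ^ 4) := by
        refine add_le_add ?_ ?_
        · calc |A| * |q1 h - Real.sin (ω * h) / ω| ≤ 2 * |q1 h - Real.sin (ω * h) / ω| :=
              mul_le_mul_of_nonneg_right hA2 (abs_nonneg _)
            _ ≤ 2 * (c * h ^ 5) := by linarith [hq1b, abs_nonneg (q1 h - Real.sin (ω * h) / ω)]
        · exact mul_le_mul hsw hAc (abs_nonneg _) hh0.le
    _ = (2 * c + ω ^ 4) * h ^ 5 := by ring
end
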